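/- Two varieties of groups 𝒩 and 𝒬 are disjoint (that is, every group belonging to both 𝒩 and 𝒬 is trivial) if and only if they are of relatively prime exponents, i.e., there exist natural numbers n and m with gcd(n, m) = 1 such that every group in 𝒩 satisfies g^n = 1 for all its elements g, and every group in 𝒬 satisfies g^m = 1 for all its elements g. -/

import Mathlib

/-- A bundled group: a type in universe `u` together with a group structure. -/
structure GroupT : Type (u + 1) where
  carrier : Type u
  [str : Group carrier]

attribute [instance] GroupT.str

/-- A variety of groups: a class of groups closed under isomorphism, subgroups,
homomorphic images, and arbitrary direct products indexed by types in the universe. -/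
structure GroupVariety : Type (u + 1) where
  Mem : GroupT.{u} → Prop
  iso_closed : ∀ {G H : GroupT.{u}}, G.carrier ≃* H.carrier → Mem G → Mem H
  subgroup_closed : ∀ (G : GroupT.{u}) (H : Subgroup G.carrier), Mem G → Mem ⟨H⟩
  quotient_closed : ∀ (G H : GroupT.{u}) (f : G.carrier →* H.carrier),
      Function.Surjective f → Mem G → Mem H
  pi_closed : ∀ (ι : Type u) (f : ι → GroupT.{u}),
      (∀ i, Mem (f i)) → Mem ⟨∀ i, (f i).carrier⟩

/-- A variety is nontrivial if it contains some nontrivial group and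
does not contain all groups. -/
def GroupVariety.IsNontrivial (V : GroupVariety.{u}) : Prop :=
  (∃ G : GroupT.{u}, V.Mem G ∧ Nontrivial G.carrier) ∧ ∃ G : GroupT.{u}, ¬ V.Mem G

/-- The dominion of a subgroup `H` of `G` relative to a class `C` of groups:
all elements of `G` on which any two homomorphisms into a `C`-group agreeing on `H`
must agree. -/
def dominion (C : GroupT.{u} → Prop) (G : Type u) [Group G] (H : Subgroup G) : Set G :=
  {a | ∀ K : GroupT.{u}, C K → ∀ f g : G →* K.carrier, (∀ h ∈ H, f h = g h) → f a = g a}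

/-- The product variety `𝒩𝒬`: the class of groups having a normal subgroup in `𝒩`
with quotient in `𝒬`. -/
def ProductVariety (N Q : GroupVariety.{u}) (G : GroupT.{u}) : Prop :=
  ∃ (M : Subgroup G.carrier) (h : M.Normal),
    N.Mem ⟨M⟩ ∧ (letI := h; Q.Mem ⟨G.carrier ⧸ M⟩)

/-- The verbal subgroup `𝒬(G)`: the intersection of all normal subgroups of `G`
whose quotient lies in `𝒬`. -/
def verbalSubgroup (Q : GroupVariety.{u}) (G : Type u) [Group G] : Subgroup G :=
  ⨅ M ∈ {M : Subgroup G | ∃ h : M.Normal, (letI := h; Q.Mem ⟨G ⧸ M⟩)}, M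

/-- Two varieties are disjoint if every group belonging to both is trivial. -/
def DisjointVarieties (𝒩 𝒬 : GroupVariety.{u}) : Prop :=
  ∀ G : GroupT.{u}, 𝒩.Mem G → 𝒬.Mem G → Subsingleton G.carrier

universe u

theorem zpow_transfer {A B : Type*} [Group A] [Group B] {a : A} {b : B}
    (hd : orderOf b ∣ orderOf a) {m n : ℤ} (h : a ^ m = a ^ n) : b ^ m = b ^ n := by
  rw [zpow_eq_zpow_iff_modEq] at h ⊢
  exact h.of_dvd (Int.natCast_dvd_natCast.mpr hd)

theorem exists_surj_zpowers {A B : Type*} [Group A] [Group B] {a : A} {b : B}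
    (hd : orderOf b ∣ orderOf a) :
    ∃ f : (Subgroup.zpowers a) →* (Subgroup.zpowers b), Function.Surjective f := by
  have hk : ∀ x : Subgroup.zpowers a, ∃ k : ℤ, a ^ k = (x : A) := fun x =>
    Subgroup.mem_zpowers_iff.mp x.2
  choose k hkk using hk
  refine ⟨{ toFun := fun x => ⟨b ^ k x, Subgroup.zpow_mem _ (Subgroup.mem_zpowers b) _⟩,
            map_one' := ?_, map_mul' := ?_ }, ?_⟩
  · have : a ^ k 1 = a ^ (0 : ℤ) := by rw [hkk]; simp
    exact Subtype.ext (by simpa using zpow_transfer hd this)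
  · intro x y
    have : a ^ k (x * y) = a ^ (k x + k y) := by
      rw [hkk, zpow_add, hkk, hkk]; rfl
    exact Subtype.ext (by simpa [zpow_add] using zpow_transfer hd this)
  · rintro ⟨y, hy⟩
    obtain ⟨j, hj⟩ := Subgroup.mem_zpowers_iff.mp hy
    set x : Subgroup.zpowers a := ⟨a ^ j, Subgroup.zpow_mem _ (Subgroup.mem_zpowers a) _⟩ with hx
    refine ⟨x, ?_⟩
    have : a ^ k x = a ^ j := hkk x
    exact Subtype.ext (by simpa [hj] using zpow_transfer hd this)

/-- If a variety contains a group with element `a`, it contains the cyclic group on any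
element `b` (of any group in the universe) whose order divides that of `a`. -/
theorem mem_zpowers_of_dvd (𝒩 : GroupVariety.{u}) {G : GroupT.{u}} (hG : 𝒩.Mem G)
    (a : G.carrier) (H : GroupT.{u}) (b : H.carrier) (hd : orderOf b ∣ orderOf a) :
    𝒩.Mem ⟨Subgroup.zpowers b⟩ := by
  obtain ⟨f, hf⟩ := exists_surj_zpowers (A := G.carrier) (B := H.carrier) hd
  exact 𝒩.quotient_closed ⟨Subgroup.zpowers a⟩ ⟨Subgroup.zpowers b⟩ f hf
    (𝒩.subgroup_closed G _ hG)

/-- key disjointness consequence -/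
theorem key_eq_one {𝒩 𝒬 : GroupVariety.{u}} (hdisj : DisjointVarieties 𝒩 𝒬)
    {G : GroupT.{u}} (hG : 𝒩.Mem G) (a : G.carrier)
    {H : GroupT.{u}} (hH : 𝒬.Mem H) (b : H.carrier) (hd : orderOf b ∣ orderOf a) :
    b = 1 := by
  have h1 : 𝒩.Mem ⟨Subgroup.zpowers b⟩ := mem_zpowers_of_dvd 𝒩 hG a H b hd
  have h2 : 𝒬.Mem ⟨Subgroup.zpowers b⟩ := 𝒬.subgroup_closed H _ hH
  have := hdisj _ h1 h2
  have : (⟨b, Subgroup.mem_zpowers b⟩ : Subgroup.zpowers b) = ⟨1, one_mem _⟩ :=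
    Subsingleton.elim _ _
  exact Subtype.ext_iff.mp this

/-- no finite exponent gives an element of infinite order -/
theorem exists_infinite_order (𝒩 : GroupVariety.{u})
    (h : ∀ n : ℕ, 0 < n → ∃ G, 𝒩.Mem G ∧ ∃ g : G.carrier, g ^ n ≠ 1) :
    ∃ G, 𝒩.Mem G ∧ ∃ x : G.carrier, orderOf x = 0 := by
  have h' : ∀ i : ℕ, ∃ G, 𝒩.Mem G ∧ ∃ g : G.carrier, g ^ (i + 1) ≠ 1 := fun i =>
    h (i + 1) i.succ_pos
  choose F hF g hg using h'
  refine ⟨⟨∀ i : ULift.{u} ℕ, (F i.down).carrier⟩,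
    𝒩.pi_closed (ULift.{u} ℕ) (fun i => F i.down) (fun i => hF i.down), fun i => g i.down, ?_⟩
  rw [orderOf_eq_zero_iff]
  intro hfin
  obtain ⟨n, hn, hx⟩ := (isOfFinOrder_iff_pow_eq_one).mp hfin
  obtain ⟨j, rfl⟩ := Nat.exists_eq_add_of_lt hn
  have := congrFun hx ⟨j⟩
  simp only [Pi.pow_apply, Pi.one_apply] at this
  exact hg j (by simpa [Nat.add_comm] using this.trans (rfl : (1 : ∀ i : ULift.{u} ℕ, (F i.down).carrier) ⟨j⟩ = (1 : (F j).carrier)))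

theorem exists_orderOf_eq_prime (V : GroupVariety.{u}) {n p : ℕ} (hp : p.Prime) (hpn : p ∣ n)
    (hn : 0 < n) (hexp : ∀ G, V.Mem G → ∀ g : G.carrier, g ^ n = 1)
    (hmin : ¬ ∀ G, V.Mem G → ∀ g : G.carrier, g ^ (n / p) = 1) :
    ∃ G, V.Mem G ∧ ∃ a : G.carrier, orderOf a = p := by
  push_neg at hmin
  obtain ⟨G, hG, g, hg⟩ := hmin
  have hord : orderOf g ∣ n := orderOf_dvd_of_pow_eq_one (hexp G hG g)
  have hord0 : orderOf g ≠ 0 := by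
    intro h; rw [h] at hord; exact hn.ne' (Nat.eq_zero_of_zero_dvd hord)
  have hpdvd : p ∣ orderOf g := by
    by_contra hnd
    have hc : Nat.Coprime (orderOf g) p :=
      (Nat.coprime_comm.mp ((hp.coprime_iff_not_dvd).mpr hnd))
    have : orderOf g ∣ (n / p) * p := by
      rwa [Nat.div_mul_cancel hpn]
    have : orderOf g ∣ n / p := hc.dvd_of_dvd_mul_right this
    exact hg (orderOf_dvd_iff_pow_eq_one.mp this)
  exact ⟨G, hG, g ^ (orderOf g / p), orderOf_pow_orderOf_div hord0 hpdvd⟩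

theorem stmt10 (𝒩 𝒬 : GroupVariety.{u}) :
    DisjointVarieties 𝒩 𝒬 ↔
      ∃ n m : ℕ, Nat.gcd n m = 1 ∧
        (∀ G : GroupT.{u}, 𝒩.Mem G → ∀ g : G.carrier, g ^ n = 1) ∧
        (∀ G : GroupT.{u}, 𝒬.Mem G → ∀ g : G.carrier, g ^ m = 1) := by
  classical
  constructor
  · intro hdisj
    by_cases hQtriv : ∀ H, 𝒬.Mem H → ∀ b : H.carrier, b = 1
    · exact ⟨0, 1, by norm_num, fun G _ g => pow_zero g,
        fun G hG g => by rw [pow_one, hQtriv G hG g]⟩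
    by_cases hNtriv : ∀ G, 𝒩.Mem G → ∀ a : G.carrier, a = 1
    · exact ⟨1, 0, by norm_num, fun G hG g => by rw [pow_one, hNtriv G hG g],
        fun G _ g => pow_zero g⟩
    push_neg at hQtriv hNtriv
    obtain ⟨H0, hH0, b0, hb0⟩ := hQtriv
    obtain ⟨G0, hG0, a0, ha0⟩ := hNtriv
    have hNexp : ∃ n : ℕ, 0 < n ∧ ∀ G, 𝒩.Mem G → ∀ g : G.carrier, g ^ n = 1 := by
      by_contra hc
      push_neg at hc
      obtain ⟨G, hG, x, hx⟩ := exists_infinite_order 𝒩 hc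
      exact hb0 (key_eq_one hdisj hG x hH0 b0 (hx ▸ dvd_zero _))
    have hQexp : ∃ m : ℕ, 0 < m ∧ ∀ H, 𝒬.Mem H → ∀ g : H.carrier, g ^ m = 1 := by
      by_contra hc
      push_neg at hc
      obtain ⟨H, hH, x, hx⟩ := exists_infinite_order 𝒬 hc
      -- symmetric: a0 in 𝒩, x of infinite order in 𝒬
      have hdisj' : DisjointVarieties 𝒬 𝒩 := fun G h1 h2 => hdisj G h2 h1
      exact ha0 (key_eq_one hdisj' hH x hG0 a0 (hx ▸ dvd_zero _))
    set n := Nat.find hNexp with hn_def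
    set m := Nat.find hQexp with hm_def
    obtain ⟨hnpos, hnexp⟩ := Nat.find_spec hNexp
    obtain ⟨hmpos, hmexp⟩ := Nat.find_spec hQexp
    refine ⟨n, m, ?_, hnexp, hmexp⟩
    by_contra hg
    obtain ⟨p, hp, hpd⟩ := Nat.exists_prime_and_dvd hg
    have hpn : p ∣ n := hpd.trans (Nat.gcd_dvd_left _ _)
    have hpm : p ∣ m := hpd.trans (Nat.gcd_dvd_right _ _)
    have hminN : ¬ ∀ G, 𝒩.Mem G → ∀ g : G.carrier, g ^ (n / p) = 1 := by
      intro hcon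
      exact Nat.find_min hNexp (Nat.div_lt_self hnpos hp.one_lt)
        ⟨Nat.div_pos (Nat.le_of_dvd hnpos hpn) hp.pos, hcon⟩
    have hminQ : ¬ ∀ H, 𝒬.Mem H → ∀ g : H.carrier, g ^ (m / p) = 1 := by
      intro hcon
      exact Nat.find_min hQexp (Nat.div_lt_self hmpos hp.one_lt)
        ⟨Nat.div_pos (Nat.le_of_dvd hmpos hpm) hp.pos, hcon⟩
    obtain ⟨G, hG, a, ha⟩ := exists_orderOf_eq_prime 𝒩 hp hpn hnpos hnexp hminN
    obtain ⟨H, hH, b, hb⟩ := exists_orderOf_eq_prime 𝒬 hp hpm hmpos hmexp hminQ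
    have hb1 : b = 1 := key_eq_one hdisj hG a hH b (by rw [ha, hb])
    rw [hb1, orderOf_one] at hb
    exact hp.one_lt.ne' hb.symm
  · rintro ⟨n, m, hgcd, hn, hm⟩ G hGN hGQ
    have h1 : ∀ g : G.carrier, g = 1 := by
      intro g
      have d1 : orderOf g ∣ n := orderOf_dvd_of_pow_eq_one (hn G hGN g)
      have d2 : orderOf g ∣ m := orderOf_dvd_of_pow_eq_one (hm G hGQ g)
      have := Nat.dvd_gcd d1 d2
      rw [hgcd] at this
      exact orderOf_eq_one_iff.mp (Nat.dvd_one.mp this)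
    exact ⟨fun a b => by rw [h1 a, h1 b]⟩
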